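/- Let k be a commutative ring, A a k-algebra, D a k-coalgebra and ψ an entwining map as above, and suppose A is an entwined module over itself: A carries a right D-coaction a ↦ Σ a₍₀₎ ⊗ a₍₁₎ with (ab)₍₀₎ ⊗ (ab)₍₁₎ = Σ a₍₀₎ b_ψ ⊗ a₍₁₎^ψ. If λ : D → A is a right D-colinear map with convolution inverse λ̄, then for all d ∈ D: Σ λ̄(d) 1₍₀₎ ⊗ 1₍₁₎ = Σ λ̄(d₍₂₎)_ψ ⊗ d₍₁₎^ψ, where 1₍₀₎ ⊗ 1₍₁₎ denotes the coaction on 1_A. -/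
import Mathlib


open TensorProduct

noncomputable section

variable {k A D : Type*} [CommRing k] [Ring A] [Algebra k A]
  [AddCommGroup D] [Module k D] [Coalgebra k D]

/-- `ψ : D ⊗ A → A ⊗ D` is an entwining map. -/
def IsEntwining (ψ : D ⊗[k] A →ₗ[k] A ⊗[k] D) : Prop :=
  -- `ψ (d ⊗ ab) = ∑ a_ψ b_φ ⊗ d^{ψφ}`
  (ψ ∘ₗ (LinearMap.mul' k A).lTensor D =
    (LinearMap.mul' k A).rTensor D ∘ₗ (TensorProduct.assoc k A A D).symm.toLinearMap ∘ₗ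
      ψ.lTensor A ∘ₗ (TensorProduct.assoc k A D A).toLinearMap ∘ₗ
        ψ.rTensor A ∘ₗ (TensorProduct.assoc k D A A).symm.toLinearMap) ∧
  -- `ψ (d ⊗ 1) = 1 ⊗ d`
  (∀ d : D, ψ (d ⊗ₜ[k] (1 : A)) = (1 : A) ⊗ₜ[k] d) ∧
  -- `∑ a_ψ ⊗ Δ (d^ψ) = ∑ a_{ψφ} ⊗ d₍₁₎^φ ⊗ d₍₂₎^ψ`
  ((Coalgebra.comul (R := k) (A := D)).lTensor A ∘ₗ ψ =
    (TensorProduct.assoc k A D D).toLinearMap ∘ₗ ψ.rTensor D ∘ₗ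
      (TensorProduct.assoc k D A D).symm.toLinearMap ∘ₗ ψ.lTensor D ∘ₗ
        (TensorProduct.assoc k D D A).toLinearMap ∘ₗ
          (Coalgebra.comul (R := k) (A := D)).rTensor A) ∧
  -- `∑ a_ψ ε(d^ψ) = ε(d) a`
  ((TensorProduct.rid k A).toLinearMap ∘ₗ
      (Coalgebra.counit (R := k) (A := D)).lTensor A ∘ₗ ψ =
    (TensorProduct.lid k A).toLinearMap ∘ₗ (Coalgebra.counit (R := k) (A := D)).rTensor A)

/-- The right `A`-action on `A ⊗ D` induced by an entwining map:
`(a ⊗ d) · a' = ∑ a a'_ψ ⊗ d^ψ`. -/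
def rmap (ψ : D ⊗[k] A →ₗ[k] A ⊗[k] D) : (A ⊗[k] D) ⊗[k] A →ₗ[k] A ⊗[k] D :=
  (LinearMap.mul' k A).rTensor D ∘ₗ (TensorProduct.assoc k A A D).symm.toLinearMap ∘ₗ
    ψ.lTensor A ∘ₗ (TensorProduct.assoc k A D A).toLinearMap

/-- The coproduct `A ⊗ Δ` of the coring `A ⊗ D` (in the model
`(A ⊗ D) ⊗_A (A ⊗ D) ≅ (A ⊗ D) ⊗ D`). -/
def corComul : A ⊗[k] D →ₗ[k] (A ⊗[k] D) ⊗[k] D :=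
  (TensorProduct.assoc k A D D).symm.toLinearMap ∘ₗ
    (Coalgebra.comul (R := k) (A := D)).lTensor A

/-- The counit `A ⊗ ε` of the coring `A ⊗ D`. -/
def corCounit : A ⊗[k] D →ₗ[k] A :=
  (TensorProduct.rid k A).toLinearMap ∘ₗ (Coalgebra.counit (R := k) (A := D)).lTensor A

/-- The right `A`-action on `(A ⊗ D) ⊗ D ≅ (A ⊗ D) ⊗_A (A ⊗ D)`. -/
def rmap2 (ψ : D ⊗[k] A →ₗ[k] A ⊗[k] D) :
    ((A ⊗[k] D) ⊗[k] D) ⊗[k] A →ₗ[k] (A ⊗[k] D) ⊗[k] D :=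
  (rmap ψ).rTensor D ∘ₗ (TensorProduct.assoc k (A ⊗[k] D) A D).symm.toLinearMap ∘ₗ
    ψ.lTensor (A ⊗[k] D) ∘ₗ (TensorProduct.assoc k (A ⊗[k] D) D A).toLinearMap

/-- Convolution of two linear maps `D → A`. -/
def convDA (f g : D →ₗ[k] A) : D →ₗ[k] A :=
  LinearMap.mul' k A ∘ₗ TensorProduct.map f g ∘ₗ Coalgebra.comul

/-- convolution action of `D →ₗ A` on `D →ₗ A ⊗ D` -/
def cstar (f : D →ₗ[k] A) (g : D →ₗ[k] A ⊗[k] D) : D →ₗ[k] A ⊗[k] D :=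
  (LinearMap.mul' k A).rTensor D ∘ₗ (TensorProduct.assoc k A A D).symm.toLinearMap ∘ₗ
    TensorProduct.map f g ∘ₗ Coalgebra.comul

lemma cstar_apply (f : D →ₗ[k] A) (g : D →ₗ[k] A ⊗[k] D) (d : D) :
    cstar f g d = (LinearMap.mul' k A).rTensor D
      ((TensorProduct.assoc k A A D).symm (TensorProduct.map f g (Coalgebra.comul d))) := rfl

/-- unit law -/
lemma cstar_one (g : D →ₗ[k] A ⊗[k] D) :
    cstar (Algebra.linearMap k A ∘ₗ Coalgebra.counit) g = g := by
  ext d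
  have h1 : TensorProduct.map ((Algebra.linearMap k A) ∘ₗ (Coalgebra.counit (R := k) (A := D))) g
      = TensorProduct.map (Algebra.linearMap k A) g ∘ₗ
        (Coalgebra.counit (R := k) (A := D)).rTensor D := by
    ext x y; simp
  rw [cstar_apply, h1]
  simp only [LinearMap.comp_apply, Coalgebra.rTensor_counit_comul, TensorProduct.map_tmul,
    Algebra.linearMap_apply, map_one]
  generalize g d = y
  induction y using TensorProduct.induction_on with
  | zero => simp
  | tmul a e => simp
  | add x y hx hy => simp [tmul_add, hx, hy]

/-- associativity law -/
lemma cstar_assoc (h f : D →ₗ[k] A) (g : D →ₗ[k] A ⊗[k] D) :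
    cstar h (cstar f g) = cstar (convDA h f) g := by
  ext d
  have h1 : TensorProduct.map h (cstar f g)
      = TensorProduct.map h ((LinearMap.mul' k A).rTensor D ∘ₗ
          (TensorProduct.assoc k A A D).symm.toLinearMap ∘ₗ TensorProduct.map f g) ∘ₗ
        (Coalgebra.comul (R := k) (A := D)).lTensor D := by
    ext x y; simp [cstar_apply]
  have h2 : TensorProduct.map (convDA h f) g
      = TensorProduct.map (LinearMap.mul' k A ∘ₗ TensorProduct.map h f) g ∘ₗ
        (Coalgebra.comul (R := k) (A := D)).rTensor D := by
    ext x y; simp [convDA]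
  rw [cstar_apply, cstar_apply, h1, h2]
  simp only [LinearMap.comp_apply]
  rw [← Coalgebra.coassoc_apply]
  generalize (Coalgebra.comul (R := k) (A := D)).rTensor D
      (Coalgebra.comul (R := k) (A := D) d) = z
  have key : ((LinearMap.mul' k A).rTensor D ∘ₗ (TensorProduct.assoc k A A D).symm.toLinearMap ∘ₗ
        TensorProduct.map h ((LinearMap.mul' k A).rTensor D ∘ₗ
          (TensorProduct.assoc k A A D).symm.toLinearMap ∘ₗ TensorProduct.map f g) ∘ₗ
        (TensorProduct.assoc k D D D).toLinearMap)
      = ((LinearMap.mul' k A).rTensor D ∘ₗ (TensorProduct.assoc k A A D).symm.toLinearMap ∘ₗ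
        TensorProduct.map (LinearMap.mul' k A ∘ₗ TensorProduct.map h f) g) := by
    ext d₁ d₂ d₃
    simp only [TensorProduct.AlgebraTensorModule.curry_apply, TensorProduct.curry_apply,
      LinearMap.coe_restrictScalars, LinearMap.comp_apply, LinearEquiv.coe_coe,
      TensorProduct.assoc_tmul, TensorProduct.map_tmul, LinearMap.mul'_apply]
    generalize g d₃ = y
    induction y using TensorProduct.induction_on with
    | zero => simp
    | tmul a e => simp [mul_assoc]
    | add x y hx hy => simp [tmul_add, hx, hy]
  simpa using LinearMap.congr_fun key z


lemma cstar_final (ρ : A →ₗ[k] A ⊗[k] D) (lamBar : D →ₗ[k] A) (d : D) :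
    cstar lamBar (ρ ∘ₗ Algebra.linearMap k A ∘ₗ Coalgebra.counit) d
      = (LinearMap.mulLeft k (lamBar d)).rTensor D (ρ 1) := by
  have h1 : TensorProduct.map lamBar (ρ ∘ₗ Algebra.linearMap k A ∘ₗ
        (Coalgebra.counit (R := k) (A := D)))
      = TensorProduct.map lamBar (ρ ∘ₗ Algebra.linearMap k A) ∘ₗ
        (Coalgebra.counit (R := k) (A := D)).lTensor D := by
    ext x y; simp
  rw [cstar_apply, h1]
  simp only [LinearMap.comp_apply, Coalgebra.lTensor_counit_comul, TensorProduct.map_tmul,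
    Algebra.linearMap_apply, map_one]
  generalize ρ 1 = y
  induction y using TensorProduct.induction_on with
  | zero => simp
  | tmul a e => simp
  | add x y hx hy => simp [tmul_add, hx, hy]

lemma cstar_colin (ψ : D ⊗[k] A →ₗ[k] A ⊗[k] D) (ρ : A →ₗ[k] A ⊗[k] D)
    (hentwined : ∀ a b : A, ρ (a * b) = rmap ψ ((ρ a) ⊗ₜ[k] b))
    (lam lamBar : D →ₗ[k] A)
    (hcolin : ρ ∘ₗ lam = lam.rTensor D ∘ₗ Coalgebra.comul) :
    cstar lam (ψ ∘ₗ lamBar.lTensor D ∘ₗ Coalgebra.comul) = ρ ∘ₗ convDA lam lamBar := by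
  have H1 : ρ ∘ₗ LinearMap.mul' k A = rmap ψ ∘ₗ ρ.rTensor A := by
    ext a b
    simp only [TensorProduct.AlgebraTensorModule.curry_apply, TensorProduct.curry_apply,
      LinearMap.coe_restrictScalars, LinearMap.comp_apply, LinearMap.mul'_apply,
      LinearMap.rTensor_tmul]
    exact hentwined a b
  have H2 : ρ.rTensor A ∘ₗ TensorProduct.map lam lamBar
      = TensorProduct.map (ρ ∘ₗ lam) lamBar := by ext x y; simp
  have H3 : TensorProduct.map (lam.rTensor D ∘ₗ (Coalgebra.comul (R := k) (A := D))) lamBar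
      = TensorProduct.map (lam.rTensor D) lamBar ∘ₗ
        (Coalgebra.comul (R := k) (A := D)).rTensor D := by ext x y; simp
  have h1 : TensorProduct.map lam (ψ ∘ₗ lamBar.lTensor D ∘ₗ (Coalgebra.comul (R := k) (A := D)))
      = TensorProduct.map lam (ψ ∘ₗ lamBar.lTensor D) ∘ₗ
        (Coalgebra.comul (R := k) (A := D)).lTensor D := by ext x y; simp
  have key : (LinearMap.mul' k A).rTensor D ∘ₗ (TensorProduct.assoc k A A D).symm.toLinearMap ∘ₗ
        TensorProduct.map lam (ψ ∘ₗ lamBar.lTensor D) ∘ₗ (TensorProduct.assoc k D D D).toLinearMap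
      = rmap ψ ∘ₗ TensorProduct.map (lam.rTensor D) lamBar := by
    ext d₁ d₂ d₃
    simp only [rmap, TensorProduct.AlgebraTensorModule.curry_apply, TensorProduct.curry_apply,
      LinearMap.coe_restrictScalars, LinearMap.comp_apply, LinearEquiv.coe_coe,
      TensorProduct.assoc_tmul, TensorProduct.map_tmul, LinearMap.lTensor_tmul,
      LinearMap.rTensor_tmul]
  ext d
  calc cstar lam (ψ ∘ₗ lamBar.lTensor D ∘ₗ Coalgebra.comul) d
      = ((LinearMap.mul' k A).rTensor D ∘ₗ (TensorProduct.assoc k A A D).symm.toLinearMap ∘ₗ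
          TensorProduct.map lam (ψ ∘ₗ lamBar.lTensor D) ∘ₗ
            (TensorProduct.assoc k D D D).toLinearMap)
          ((Coalgebra.comul (R := k) (A := D)).rTensor D (Coalgebra.comul d)) := by
        rw [cstar_apply, h1]
        simp only [LinearMap.comp_apply, LinearEquiv.coe_coe, Coalgebra.coassoc_apply]
    _ = (rmap ψ ∘ₗ TensorProduct.map (lam.rTensor D) lamBar)
          ((Coalgebra.comul (R := k) (A := D)).rTensor D (Coalgebra.comul d)) := by
        rw [key]
    _ = (ρ ∘ₗ convDA lam lamBar) d := by
        have H4 : ρ ∘ₗ convDA lam lamBar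
            = rmap ψ ∘ₗ TensorProduct.map (lam.rTensor D) lamBar ∘ₗ
                (Coalgebra.comul (R := k) (A := D)).rTensor D ∘ₗ Coalgebra.comul := by
          calc ρ ∘ₗ convDA lam lamBar
              = (ρ ∘ₗ LinearMap.mul' k A) ∘ₗ TensorProduct.map lam lamBar ∘ₗ Coalgebra.comul := by
                rw [convDA]; simp only [LinearMap.comp_assoc]
            _ = rmap ψ ∘ₗ (ρ.rTensor A ∘ₗ TensorProduct.map lam lamBar) ∘ₗ Coalgebra.comul := by
                rw [H1]; simp only [LinearMap.comp_assoc]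
            _ = rmap ψ ∘ₗ TensorProduct.map (lam.rTensor D ∘ₗ Coalgebra.comul) lamBar ∘ₗ
                  Coalgebra.comul := by rw [H2, hcolin]
            _ = rmap ψ ∘ₗ TensorProduct.map (lam.rTensor D) lamBar ∘ₗ
                  (Coalgebra.comul (R := k) (A := D)).rTensor D ∘ₗ Coalgebra.comul := by
                rw [H3]; simp only [LinearMap.comp_assoc]
        rw [H4]; simp only [LinearMap.comp_apply]

theorem stmt_16 (ψ : D ⊗[k] A →ₗ[k] A ⊗[k] D) (hψ : IsEntwining ψ)
    (ρ : A →ₗ[k] A ⊗[k] D)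
    -- `A` is an entwined module over itself: `ρ` is a counital coassociative coaction …
    (hcoassoc : ∀ a : A,
      (TensorProduct.assoc k A D D) (ρ.rTensor D (ρ a)) =
        (Coalgebra.comul (R := k) (A := D)).lTensor A (ρ a))
    (hcounit : ∀ a : A,
      (TensorProduct.rid k A) ((Coalgebra.counit (R := k) (A := D)).lTensor A (ρ a)) = a)
    -- … satisfying `ρ(ab) = ∑ a₍₀₎ b_ψ ⊗ a₍₁₎^ψ`
    (hentwined : ∀ a b : A, ρ (a * b) = rmap ψ ((ρ a) ⊗ₜ[k] b))
    -- `λ : D → A` is right `D`-colinear with convolution inverse `λ̄`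
    (lam lamBar : D →ₗ[k] A)
    (hcolin : ρ ∘ₗ lam = lam.rTensor D ∘ₗ Coalgebra.comul)
    (hinv₁ : convDA lam lamBar = Algebra.linearMap k A ∘ₗ Coalgebra.counit)
    (hinv₂ : convDA lamBar lam = Algebra.linearMap k A ∘ₗ Coalgebra.counit) :
    -- `∑ λ̄(d) 1₍₀₎ ⊗ 1₍₁₎ = ∑ λ̄(d₍₂₎)_ψ ⊗ d₍₁₎^ψ` for all `d`
    ∀ d : D,
      (LinearMap.mulLeft k (lamBar d)).rTensor D (ρ 1) =
        ψ ((lamBar.lTensor D) (Coalgebra.comul d)) := by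
  have e1 : cstar lam (ψ ∘ₗ lamBar.lTensor D ∘ₗ Coalgebra.comul) = ρ ∘ₗ convDA lam lamBar :=
    cstar_colin ψ ρ hentwined lam lamBar hcolin
  rw [hinv₁] at e1
  have e2 := cstar_assoc lamBar lam (ψ ∘ₗ lamBar.lTensor D ∘ₗ Coalgebra.comul)
  rw [hinv₂, cstar_one, e1] at e2
  intro d
  rw [show ψ ((lamBar.lTensor D) (Coalgebra.comul d))
      = (ψ ∘ₗ lamBar.lTensor D ∘ₗ Coalgebra.comul) d from rfl, ← e2]
  exact (cstar_final ρ lamBar d).symm
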